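/- Let A be a flat ℤ/p²-algebra such that A/p is reduced, I an automorphism of A congruent to the identity mod p, and φ an endomorphism with φ(x) ≡ x^p mod p. Then I ∘ φ ∘ I⁻¹ = φ if and only if I is the identity. -/
import Mathlib


/-- Let `A` be a flat `ℤ/p²`-algebra such that `A/p` is reduced, `I` an automorphism of `A`
congruent to the identity mod `p`, and `φ` an endomorphism with `φ(x) ≡ x^p mod p`.
Then `I ∘ φ ∘ I⁻¹ = φ` if and only if `I` is the identity. -/
theorem stmt1 (p : ℕ) (hp : p.Prime) (A : Type*) [CommRing A]
    (hp2 : (p : A) ^ 2 = 0)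
    (hflat : ∀ x : A, (p : A) * x = 0 → ∃ y : A, x = (p : A) * y)
    (hred : IsReduced (A ⧸ Ideal.span {(p : A)}))
    (I : A ≃+* A) (hI : ∀ x : A, ∃ y : A, I x - x = (p : A) * y)
    (φ : A →+* A) (hφ : ∀ x : A, ∃ y : A, φ x - x ^ p = (p : A) * y) :
    (∀ x : A, I (φ (I.symm x)) = φ x) ↔ (∀ x : A, I x = x) := by
  have key : ∀ x e : A, (x + (p : A) * e) ^ p = x ^ p := by
    intro x e
    rw [add_pow, Finset.sum_range_succ, Nat.sub_self, pow_zero, Nat.choose_self]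
    push_cast
    rw [mul_one, mul_one]
    have hsum : ∑ k ∈ Finset.range p, x ^ k * ((p : A) * e) ^ (p - k) * (p.choose k : A)
        = 0 := by
      apply Finset.sum_eq_zero
      intro k hk
      rw [Finset.mem_range] at hk
      by_cases hk1 : k = p - 1
      · subst hk1
        have hpk : p - (p - 1) = 1 := by have := hp.two_le; omega
        have hch : (p.choose (p - 1) : A) = (p : A) := by
          have h1 : (1 : ℕ) ≤ p := hp.one_lt.le
          rw [Nat.choose_symm h1, Nat.choose_one_right]
        rw [hpk, pow_one, hch]
        linear_combination (x ^ (p - 1) * e) * hp2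
      · have h2 : 2 ≤ p - k := by have := hp.two_le; omega
        have hz : ((p : A) * e) ^ (p - k) = 0 := by
          have : ((p : A) * e) ^ (p - k) = ((p : A) * e) ^ 2 * ((p : A) * e) ^ (p - k - 2) := by
            rw [← pow_add]; congr 1; omega
          rw [this, mul_pow, hp2, zero_mul, zero_mul]
        rw [hz, mul_zero, zero_mul]
    rw [hsum, zero_add]
  constructor
  · intro H x
    obtain ⟨e, he⟩ := hI x
    have H' := H (I x)
    rw [RingEquiv.symm_apply_apply] at H'
    obtain ⟨y1, hy1⟩ := hφ e
    obtain ⟨y2, hy2⟩ := hφ x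
    obtain ⟨y3, hy3⟩ := hI y2
    have hIx : I x = x + (p : A) * e := by linear_combination he
    have hφx : φ x = x ^ p + (p : A) * y2 := by linear_combination hy2
    have lhs : I (φ x) = φ x := by
      rw [hφx, map_add, map_mul, map_pow, map_natCast, hIx, key x e]
      have hIy2 : I y2 = y2 + (p : A) * y3 := by linear_combination hy3
      rw [hIy2]
      linear_combination y3 * hp2
    have rhs : φ (I x) = φ x + (p : A) * e ^ p := by
      rw [hIx, map_add, map_mul, map_natCast, hφx]
      have hφe : φ e = e ^ p + (p : A) * y1 := by linear_combination hy1
      rw [hφe]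
      linear_combination y1 * hp2
    have hpe : (p : A) * e ^ p = 0 := by
      rw [lhs, rhs] at H'
      linear_combination -H'
    obtain ⟨z, hz⟩ := hflat (e ^ p) hpe
    have hmem : e ∈ Ideal.span {(p : A)} := by
      have hnil : IsNilpotent (Ideal.Quotient.mk (Ideal.span {(p : A)}) e) := by
        refine ⟨p, ?_⟩
        rw [← map_pow, hz]
        exact (Ideal.Quotient.eq_zero_iff_mem).mpr
          (Ideal.mul_mem_right _ _ (Ideal.mem_span_singleton_self _))
      have := hnil.eq_zero
      rwa [Ideal.Quotient.eq_zero_iff_mem] at this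
    obtain ⟨c, hc⟩ := Ideal.mem_span_singleton'.mp hmem
    have hz0 : I x - x = 0 := by
      rw [he, ← hc]
      linear_combination c * hp2
    exact sub_eq_zero.mp hz0
  · intro H x
    have h1 : I.symm x = x := by
      have h2 := H (I.symm x)
      rw [I.apply_symm_apply] at h2
      exact h2.symm
    rw [h1, H]
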